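/- Let X, Y, Z be standard Borel spaces, μ a kernel from Z to X and ν a kernel from Z to Y such that μ^z and ν^z are atomless probability measures for all z ∈ Z. Then there exists a jointly Borel function G : Z × X → Y such that for each z ∈ Z the map G(z,·) : X → Y is a Borel isomorphism with G(z,·)_*μ^z = ν^z. -/

import Mathlib

open MeasureTheory ProbabilityTheory

section ParamIsoAux

open MeasureTheory Set Function Filter ProbabilityTheory Cardinal

namespace ParamIso

noncomputable def myCantor (f : ℕ → Bool) : ℝ := 1/4 + cantorFunction (1/3) f / 6

lemma cantorFunction_nonneg (f : ℕ → Bool) : 0 ≤ cantorFunction (1/3) f :=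
  tsum_nonneg fun n => cantorFunctionAux_nonneg (by norm_num)

lemma cantorFunction_le_32 (f : ℕ → Bool) : cantorFunction (1/3) f ≤ 3/2 := by
  have h := Summable.tsum_le_tsum (f := cantorFunctionAux (1/3) f) (g := fun n => (1/3:ℝ)^n)
    (fun n => by cases h : f n <;> simp [cantorFunctionAux, h, le_of_lt] <;> positivity)
    (summable_cantor_function f (by norm_num) (by norm_num))
    (summable_geometric_of_lt_one (by norm_num) (by norm_num))
  rwa [tsum_geometric_of_lt_one (by norm_num) (by norm_num), show (1 - 1/3 : ℝ)⁻¹ = 3/2 by norm_num] at h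

lemma myCantor_injective : Injective myCantor := by
  intro f g h
  have := cantorFunction_injective (c := 1/3) (by norm_num) (by norm_num)
  apply this
  unfold myCantor at h
  linarith

lemma myCantor_mem_Ioo (f : ℕ → Bool) : myCantor f ∈ Ioo (0:ℝ) 1 := by
  have h1 := cantorFunction_nonneg f
  have h2 := cantorFunction_le_32 f
  constructor <;> (unfold myCantor; nlinarith)

lemma measurable_myCantor : Measurable myCantor := by
  have : ∀ n, Measurable fun f : ℕ → Bool => cantorFunctionAux (1/3) f n := by
    intro n
    have : (fun f : ℕ → Bool => cantorFunctionAux (1/3) f n)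
        = (fun b : Bool => cond b ((1/3:ℝ)^n) 0) ∘ (fun f : ℕ → Bool => f n) := rfl
    rw [this]
    exact (measurable_from_top).comp (measurable_pi_apply n)
  have hmeas : Measurable fun f : ℕ → Bool => cantorFunction (1/3) f := by
    apply measurable_of_tendsto_metrizable (f := fun N f => ∑ n ∈ Finset.range N, cantorFunctionAux (1/3) f n)
    · exact fun N => Finset.measurable_sum _ fun n _ => this n
    · rw [tendsto_pi_nhds]
      intro f
      exact (summable_cantor_function f (by norm_num) (by norm_num)).hasSum.tendsto_sum_nat
  unfold myCantor
  fun_prop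

lemma volume_range_myCantor : volume (Set.range myCantor) = 0 := by
  have key : ∀ N : ℕ, volume (Set.range myCantor) ≤ ENNReal.ofReal ((1/4) * (2/3)^N) := by
    intro N
    -- cover by intervals indexed by Fin N → Bool
    set c : ℝ := 1/3 with hc
    have hcover : Set.range myCantor ⊆
        ⋃ s : Fin N → Bool, Icc (1/4 + (∑ i : Fin N, cond (s i) (c^(i:ℕ)) 0)/6)
          (1/4 + (∑ i : Fin N, cond (s i) (c^(i:ℕ)) 0)/6 + (1/4) * c^N) := by
      rintro _ ⟨f, rfl⟩
      refine mem_iUnion.2 ⟨fun i => f i, ?_⟩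
      have hsum : cantorFunction c f = (∑ i ∈ Finset.range N, cantorFunctionAux c f i)
          + ∑' i, cantorFunctionAux c f (i + N) :=
        (Summable.sum_add_tsum_nat_add (f := cantorFunctionAux c f) N
          (summable_cantor_function f (by norm_num) (by norm_num))).symm
      have hfin : (∑ i ∈ Finset.range N, cantorFunctionAux c f i)
          = ∑ i : Fin N, cond (f i) (c^(i:ℕ)) 0 := by
        rw [Finset.sum_range fun i => cantorFunctionAux c f i]
        rfl
      have htail0 : 0 ≤ ∑' i, cantorFunctionAux c f (i + N) :=
        tsum_nonneg fun n => cantorFunctionAux_nonneg (by norm_num)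
      have htail : (∑' i, cantorFunctionAux c f (i + N)) ≤ (3/2) * c^N := by
        have h := Summable.tsum_le_tsum (f := fun i => cantorFunctionAux c f (i + N))
          (g := fun i => c^(i+N))
          (fun n => by cases h : f (n + N) <;> simp [cantorFunctionAux, h, le_of_lt] <;> positivity)
          ((summable_cantor_function f (by norm_num) (by norm_num)).comp_injective
            (add_left_injective N))
          (((summable_geometric_of_lt_one (by norm_num) (by norm_num)
            (r := c))).comp_injective (add_left_injective N))
        calc (∑' i, cantorFunctionAux c f (i + N)) ≤ ∑' i, c^(i+N) := h
          _ = c^N * (1 - c)⁻¹ := by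
              simp_rw [pow_add, mul_comm]
              rw [tsum_mul_left, tsum_geometric_of_lt_one (by norm_num) (by norm_num)]
          _ ≤ (3/2) * c^N := by rw [show (1 - c)⁻¹ = 3/2 by norm_num]; ring_nf; simp
      constructor
      · unfold myCantor; rw [hsum, hfin]; linarith
      · unfold myCantor
        rw [hsum, hfin]
        have h6 : (3/2) * c^N ≤ 6 * ((1/4) * c^N) := by
          rw [hc]; nlinarith [pow_nonneg (show (0:ℝ) ≤ 1/3 by norm_num) N]
        nlinarith [htail]
    calc volume (Set.range myCantor)
        ≤ ∑ s : Fin N → Bool, volume (Icc (1/4 + (∑ i : Fin N, cond (s i) (c^(i:ℕ)) 0)/6)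
          (1/4 + (∑ i : Fin N, cond (s i) (c^(i:ℕ)) 0)/6 + (1/4) * c^N)) :=
          le_trans (measure_mono hcover) (measure_iUnion_fintype_le _ _)
      _ = ∑ s : Fin N → Bool, ENNReal.ofReal ((1/4) * c^N) := by
          apply Finset.sum_congr rfl
          intro s _
          rw [Real.volume_Icc]
          congr 1
          ring
      _ ≤ ENNReal.ofReal ((1/4) * (2/3)^N) := by
          rw [Finset.sum_const, Finset.card_univ, Fintype.card_fun]
          simp only [Fintype.card_fin, Fintype.card_bool, nsmul_eq_mul]
          rw [← ENNReal.ofReal_natCast, ← ENNReal.ofReal_mul (by positivity)]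
          apply ENNReal.ofReal_le_ofReal
          rw [hc]
          push_cast
          rw [show ((2:ℝ)^N * ((1/4) * (1/3)^N)) = (1/4) * (2^N * (1/3)^N) by ring, ← mul_pow]
          norm_num
  have htend : Filter.Tendsto (fun N : ℕ => ENNReal.ofReal ((1/4) * (2/3)^N)) Filter.atTop (nhds 0) := by
    rw [show (0 : ENNReal) = ENNReal.ofReal 0 by simp]
    apply ENNReal.tendsto_ofReal
    have : Filter.Tendsto (fun N : ℕ => ((2:ℝ)/3)^N) Filter.atTop (nhds 0) :=
      tendsto_pow_atTop_nhds_zero_of_lt_one (by norm_num) (by norm_num)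
    have := this.const_mul (1/4 : ℝ)
    simpa using this
  exact le_antisymm (ge_of_tendsto' htend key) (zero_le)



/-! ### Elementary interval limits -/

lemma iInter_Iic_add (a : ℝ) : (⋂ n : ℕ, Iic (a + ((n:ℝ)+1)⁻¹)) = Iic a := by
  ext x
  simp only [mem_iInter, mem_Iic]
  constructor
  · intro h
    by_contra hx
    push_neg at hx
    obtain ⟨n, hn⟩ := exists_nat_one_div_lt (sub_pos.2 hx)
    have := h n
    rw [one_div] at hn
    linarith
  · intro h n
    have : (0:ℝ) < ((n:ℝ)+1)⁻¹ := by positivity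
    linarith

lemma iUnion_Iic_sub (a : ℝ) : (⋃ n : ℕ, Iic (a - ((n:ℝ)+1)⁻¹)) = Iio a := by
  ext x
  simp only [mem_iUnion, mem_Iic, mem_Iio]
  constructor
  · rintro ⟨n, hn⟩
    have : (0:ℝ) < ((n:ℝ)+1)⁻¹ := by positivity
    linarith
  · intro h
    obtain ⟨n, hn⟩ := exists_nat_one_div_lt (sub_pos.2 h)
    rw [one_div] at hn
    exact ⟨n, by linarith⟩

lemma tendsto_measure_Iic_add (μ : Measure ℝ) [IsFiniteMeasure μ] (a : ℝ) :
    Tendsto (fun n : ℕ => μ (Iic (a + ((n:ℝ)+1)⁻¹))) atTop (nhds (μ (Iic a))) := by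
  have h := tendsto_measure_iInter_atTop (μ := μ)
    (s := fun n : ℕ => Iic (a + ((n:ℝ)+1)⁻¹))
    (fun n => (measurableSet_Iic).nullMeasurableSet)
    (fun n m hnm => Iic_subset_Iic.2 (by
      have : ((m:ℝ)+1)⁻¹ ≤ ((n:ℝ)+1)⁻¹ := by
        apply inv_anti₀ (by positivity)
        have : (n:ℝ) ≤ (m:ℝ) := Nat.cast_le.2 hnm
        linarith
      linarith))
    ⟨0, measure_ne_top _ _⟩
  rwa [iInter_Iic_add] at h

lemma tendsto_measure_Iic_sub (μ : Measure ℝ) (a : ℝ) :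
    Tendsto (fun n : ℕ => μ (Iic (a - ((n:ℝ)+1)⁻¹))) atTop (nhds (μ (Iio a))) := by
  have h := tendsto_measure_iUnion_atTop (μ := μ)
    (s := fun n : ℕ => Iic (a - ((n:ℝ)+1)⁻¹))
    (fun n m hnm => Iic_subset_Iic.2 (by
      have : ((m:ℝ)+1)⁻¹ ≤ ((n:ℝ)+1)⁻¹ := by
        apply inv_anti₀ (by positivity)
        have : (n:ℝ) ≤ (m:ℝ) := Nat.cast_le.2 hnm
        linarith
      linarith))
  rwa [iUnion_Iic_sub] at h

/-! ### CDF of a kernel -/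

variable {Z : Type*} [MeasurableSpace Z]

noncomputable def cdfK (κ : Kernel Z ℝ) (z : Z) (x : ℝ) : ℝ := (κ z (Iic x)).toReal

lemma ofReal_cdfK (κ : Kernel Z ℝ) [IsMarkovKernel κ] (z : Z) (x : ℝ) :
    ENNReal.ofReal (cdfK κ z x) = κ z (Iic x) :=
  ENNReal.ofReal_toReal (measure_ne_top _ _)

lemma cdfK_nonneg (κ : Kernel Z ℝ) (z : Z) (x : ℝ) : 0 ≤ cdfK κ z x :=
  ENNReal.toReal_nonneg

lemma cdfK_le_one (κ : Kernel Z ℝ) [IsMarkovKernel κ] (z : Z) (x : ℝ) : cdfK κ z x ≤ 1 := by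
  unfold cdfK
  have := ENNReal.toReal_mono (ENNReal.one_ne_top) (prob_le_one (μ := κ z) (s := Iic x))
  simpa using this

lemma cdfK_mono (κ : Kernel Z ℝ) [IsMarkovKernel κ] (z : Z) : Monotone (cdfK κ z) :=
  fun x y hxy => ENNReal.toReal_mono (measure_ne_top _ _) (measure_mono (Iic_subset_Iic.2 hxy))

lemma cdfK_le_iff (κ : Kernel Z ℝ) [IsMarkovKernel κ] (z : Z) (x : ℝ) {t : ℝ} (ht : 0 ≤ t) :
    cdfK κ z x ≤ t ↔ κ z (Iic x) ≤ ENNReal.ofReal t := by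
  rw [← ofReal_cdfK κ z x, ENNReal.ofReal_le_ofReal_iff ht]

lemma measurable_cdfK (κ : Kernel Z ℝ) [IsMarkovKernel κ] :
    Measurable fun p : Z × ℝ => cdfK κ p.1 p.2 := by
  have ht : MeasurableSet {p : (Z × ℝ) × ℝ | p.2 ≤ p.1.2} :=
    measurableSet_le measurable_snd measurable_fst.snd
  have h := Kernel.measurable_kernel_prodMk_left
    (κ := κ.comap Prod.fst measurable_fst) ht
  exact h.ennreal_toReal

lemma tendsto_cdfK_atTop (κ : Kernel Z ℝ) [IsMarkovKernel κ] (z : Z) :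
    Tendsto (cdfK κ z) atTop (nhds 1) := by
  have h := tendsto_measure_Iic_atTop (κ z)
  rw [measure_univ] at h
  have := (ENNReal.tendsto_toReal (a := 1) ENNReal.one_ne_top).comp h
  simp [Function.comp_def] at this
  exact this

lemma tendsto_cdfK_atBot (κ : Kernel Z ℝ) [IsMarkovKernel κ] (z : Z) :
    Tendsto (cdfK κ z) atBot (nhds 0) := by
  have h : Tendsto (fun x : ℝ => κ z (Iic x)) atBot (nhds (κ z (⋂ x : ℝ, Iic x))) := by
    apply tendsto_measure_iInter_atBot
      (fun x => (measurableSet_Iic).nullMeasurableSet)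
      (fun x y hxy => Iic_subset_Iic.2 hxy)
      ⟨0, measure_ne_top _ _⟩
  have hempty : (⋂ x : ℝ, Iic x) = ∅ := by
    ext y
    simp only [mem_iInter, mem_Iic, mem_empty_iff_false, iff_false, not_forall, not_le]
    exact ⟨y - 1, by linarith⟩
  rw [hempty, measure_empty] at h
  have := (ENNReal.tendsto_toReal (a := 0) (by simp)).comp h
  simp [Function.comp_def] at this
  exact this

/-! ### The uniform distribution of the CDF (atomless case) -/

lemma measure_cdfK_le (κ : Kernel Z ℝ) [IsMarkovKernel κ] (z : Z)
    (hz : ∀ x : ℝ, κ z {x} = 0) {t : ℝ} (ht0 : 0 ≤ t) (ht1 : t ≤ 1) :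
    κ z {x | cdfK κ z x ≤ t} = ENNReal.ofReal t := by
  set s := {x | cdfK κ z x ≤ t} with hs
  have hlow : ∀ ⦃x y : ℝ⦄, x ∈ s → y ≤ x → y ∈ s :=
    fun x y hx hyx => le_trans (cdfK_mono κ z hyx) hx
  by_cases hse : s = ∅
  · -- t must be 0
    have hallgt : ∀ x : ℝ, t < cdfK κ z x := by
      intro x
      by_contra h
      push_neg at h
      exact (eq_empty_iff_forall_notMem.1 hse x) h
    have ht0' : t ≤ 0 :=
      ge_of_tendsto (tendsto_cdfK_atBot κ z) (Eventually.of_forall fun x => (hallgt x).le)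
    have : t = 0 := le_antisymm ht0' ht0
    rw [hse, this]
    simp
  · have hsne : s.Nonempty := nonempty_iff_ne_empty.2 hse
    by_cases hbdd : BddAbove s
    · set a := sSup s with ha
      have hIio : Iio a ⊆ s := by
        intro x hx
        obtain ⟨y, hy, hxy⟩ := exists_lt_of_lt_csSup hsne hx
        exact hlow hy hxy.le
      have hsub : s ⊆ Iic a := fun x hx => le_csSup hbdd hx
      by_cases hmem : a ∈ s
      · have hseq : s = Iic a := by
          apply Subset.antisymm hsub
          intro y hy
          exact hlow hmem hy
        rw [hseq]
        refine le_antisymm ?_ ?_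
        · rw [← ofReal_cdfK κ z a]
          exact ENNReal.ofReal_le_ofReal hmem
        · have hnot : ∀ n : ℕ, ENNReal.ofReal t ≤ κ z (Iic (a + ((n:ℝ)+1)⁻¹)) := by
            intro n
            have hnm : a + ((n:ℝ)+1)⁻¹ ∉ s := by
              intro hmem'
              have := hsub hmem'
              rw [mem_Iic] at this
              have : (0:ℝ) < ((n:ℝ)+1)⁻¹ := by positivity
              linarith [hsub hmem', mem_Iic.1 (hsub hmem')]
            have : t < cdfK κ z (a + ((n:ℝ)+1)⁻¹) := by
              by_contra h
              push_neg at h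
              exact hnm h
            rw [← ofReal_cdfK κ z]
            exact ENNReal.ofReal_le_ofReal this.le
          exact ge_of_tendsto (tendsto_measure_Iic_add (κ z) a) (Eventually.of_forall hnot)
      · have hseq : s = Iio a := by
          apply Subset.antisymm
          · intro y hy
            rcases lt_or_eq_of_le (mem_Iic.1 (hsub hy)) with h | h
            · exact h
            · exact absurd (h ▸ hy) hmem
          · exact hIio
        rw [hseq]
        refine le_antisymm ?_ ?_
        · have : ∀ n : ℕ, κ z (Iic (a - ((n:ℝ)+1)⁻¹)) ≤ ENNReal.ofReal t := by
            intro n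
            have hin : a - ((n:ℝ)+1)⁻¹ ∈ s := by
              apply hIio
              have : (0:ℝ) < ((n:ℝ)+1)⁻¹ := by positivity
              simp only [mem_Iio]
              linarith
            rw [← ofReal_cdfK κ z]
            exact ENNReal.ofReal_le_ofReal hin
          exact le_of_tendsto (tendsto_measure_Iic_sub (κ z) a) (Eventually.of_forall this)
        · have hlt : t < cdfK κ z a := by
            by_contra h
            push_neg at h
            exact hmem h
          have h1 : ENNReal.ofReal t ≤ κ z (Iic a) := by
            rw [← ofReal_cdfK κ z]
            exact ENNReal.ofReal_le_ofReal hlt.le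
          rwa [measure_congr (Iio_ae_eq_Iic' (hz a)).symm] at h1
    · -- s unbounded above: s = Set.univ and t = 1
      have hsuniv : s = Set.univ := by
        rw [eq_univ_iff_forall]
        intro x
        obtain ⟨y, hy, hxy⟩ := not_bddAbove_iff.1 hbdd x
        exact hlow hy hxy.le
      have h1t : (1:ℝ) ≤ t := by
        apply le_of_tendsto (tendsto_cdfK_atTop κ z)
        exact Eventually.of_forall fun x => show x ∈ s from hsuniv.symm ▸ mem_univ x
      have : t = 1 := le_antisymm ht1 h1t
      rw [hsuniv, this]
      simp

lemma measurable_cdfK_right (κ : Kernel Z ℝ) [IsMarkovKernel κ] (z : Z) :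
    Measurable (cdfK κ z) :=
  (measurable_cdfK κ).comp measurable_prodMk_left

lemma map_cdfK (κ : Kernel Z ℝ) [IsMarkovKernel κ] (z : Z)
    (hz : ∀ x : ℝ, κ z {x} = 0) :
    (κ z).map (cdfK κ z) = volume.restrict (Icc (0:ℝ) 1) := by
  have hmeas := measurable_cdfK_right κ z
  have : IsProbabilityMeasure ((κ z).map (cdfK κ z)) :=
    Measure.isProbabilityMeasure_map hmeas.aemeasurable
  have hfin : IsFiniteMeasure ((κ z).map (cdfK κ z)) := inferInstance
  apply Measure.ext_of_Iic
  intro t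
  rw [Measure.map_apply hmeas measurableSet_Iic, Measure.restrict_apply measurableSet_Iic]
  rcases le_or_gt t 0 with ht | ht
  · rcases lt_or_eq_of_le ht with ht' | ht'
    · have h1 : cdfK κ z ⁻¹' Iic t = ∅ := by
        ext x
        simp only [mem_preimage, mem_Iic, mem_empty_iff_false, iff_false, not_le]
        exact lt_of_lt_of_le ht' (cdfK_nonneg κ z x)
      have h2 : Iic t ∩ Icc (0:ℝ) 1 = ∅ := by
        ext x
        simp only [mem_inter_iff, mem_Iic, mem_Icc, mem_empty_iff_false, iff_false]
        rintro ⟨h1', h2', _⟩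
        linarith
      rw [h1, h2]
      simp
    · subst ht'
      have h1 : cdfK κ z ⁻¹' Iic (0:ℝ) = {x | cdfK κ z x ≤ 0} := rfl
      have h2 : Iic (0:ℝ) ∩ Icc (0:ℝ) 1 = Icc 0 0 := by
        ext x
        simp only [mem_inter_iff, mem_Iic, mem_Icc]
        constructor
        · rintro ⟨h1', h2', _⟩; exact ⟨h2', h1'⟩
        · rintro ⟨h1', h2'⟩; exact ⟨h2', h1', by linarith⟩
      rw [h1, h2, measure_cdfK_le κ z hz le_rfl (by norm_num)]
      simp
  · rcases le_or_gt t 1 with ht1 | ht1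
    · have h1 : cdfK κ z ⁻¹' Iic t = {x | cdfK κ z x ≤ t} := rfl
      have h2 : Iic t ∩ Icc (0:ℝ) 1 = Icc 0 t := by
        ext x
        simp only [mem_inter_iff, mem_Iic, mem_Icc]
        constructor
        · rintro ⟨h1', h2', _⟩; exact ⟨h2', h1'⟩
        · rintro ⟨h1', h2'⟩; exact ⟨h2', h1', by linarith⟩
      rw [h1, h2, measure_cdfK_le κ z hz ht.le ht1, Real.volume_Icc]
      congr 1
      ring
    · have h1 : cdfK κ z ⁻¹' Iic t = Set.univ := by
        ext x
        simp only [mem_preimage, mem_Iic, mem_univ, iff_true]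
        linarith [cdfK_le_one κ z x]
      have h2 : Iic t ∩ Icc (0:ℝ) 1 = Icc 0 1 := by
        ext x
        simp only [mem_inter_iff, mem_Iic, mem_Icc]
        constructor
        · rintro ⟨h1', h2', h3'⟩; exact ⟨h2', h3'⟩
        · rintro ⟨h1', h2'⟩; exact ⟨by linarith, h1', h2'⟩
      rw [h1, h2, Real.volume_Icc]
      simp [measure_univ]

/-! ### Quantile function -/

noncomputable def quantK (κ : Kernel Z ℝ) (z : Z) (p : ℝ) : ℝ :=
  if 0 < p ∧ p < 1 then sInf {x | p ≤ cdfK κ z x} else 0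

lemma quantK_setNE (κ : Kernel Z ℝ) [IsMarkovKernel κ] (z : Z) {p : ℝ} (hp1 : p < 1) :
    {x | p ≤ cdfK κ z x}.Nonempty := by
  have := (tendsto_cdfK_atTop κ z).eventually (eventually_ge_nhds hp1)
  exact this.exists

lemma quantK_bddBelow (κ : Kernel Z ℝ) [IsMarkovKernel κ] (z : Z) {p : ℝ} (hp : 0 < p) :
    BddBelow {x | p ≤ cdfK κ z x} := by
  have := (tendsto_cdfK_atBot κ z).eventually (eventually_lt_nhds hp)
  obtain ⟨x0, hx0⟩ := this.exists
  refine ⟨x0, fun y hy => ?_⟩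
  by_contra h
  push_neg at h
  have := cdfK_mono κ z h.le
  have : p ≤ cdfK κ z x0 := le_trans hy this
  linarith

lemma quantK_galois (κ : Kernel Z ℝ) [IsMarkovKernel κ] (z : Z) {p : ℝ}
    (hp : 0 < p) (hp1 : p < 1) (c : ℝ) :
    quantK κ z p ≤ c ↔ p ≤ cdfK κ z c := by
  rw [quantK, if_pos ⟨hp, hp1⟩]
  constructor
  · intro h
    -- for every d > c there is x in the set with x < d
    have key : ∀ n : ℕ, p ≤ cdfK κ z (c + ((n:ℝ)+1)⁻¹) := by
      intro n
      have hlt : sInf {x | p ≤ cdfK κ z x} < c + ((n:ℝ)+1)⁻¹ := by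
        have : (0:ℝ) < ((n:ℝ)+1)⁻¹ := by positivity
        linarith
      obtain ⟨x, hx, hxd⟩ :=
        (csInf_lt_iff (quantK_bddBelow κ z hp) (quantK_setNE κ z hp1)).1 hlt
      exact le_trans hx (cdfK_mono κ z hxd.le)
    -- pass to the limit using right continuity
    have htends : Tendsto (fun n : ℕ => cdfK κ z (c + ((n:ℝ)+1)⁻¹)) atTop
        (nhds (cdfK κ z c)) := by
      have h1 := tendsto_measure_Iic_add (κ z) c
      have := (ENNReal.tendsto_toReal (a := κ z (Iic c)) (measure_ne_top _ _)).comp h1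
      exact this
    exact ge_of_tendsto htends (Eventually.of_forall key)
  · intro h
    exact csInf_le (quantK_bddBelow κ z hp) h

lemma measurable_quantK (κ : Kernel Z ℝ) [IsMarkovKernel κ] :
    Measurable fun q : Z × ℝ => quantK κ q.1 q.2 := by
  apply measurable_of_Iic
  intro c
  have hset : (fun q : Z × ℝ => quantK κ q.1 q.2) ⁻¹' Iic c
      = ({q : Z × ℝ | 0 < q.2 ∧ q.2 < 1} ∩ {q : Z × ℝ | q.2 ≤ cdfK κ q.1 c})
        ∪ ({q : Z × ℝ | ¬(0 < q.2 ∧ q.2 < 1)} ∩ {q : Z × ℝ | (0:ℝ) ≤ c}) := by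
    ext q
    simp only [mem_preimage, mem_Iic, mem_union, mem_inter_iff, mem_setOf_eq]
    by_cases hq : 0 < q.2 ∧ q.2 < 1
    · simp only [hq, true_and, not_true_eq_false, false_and, or_false]
      exact quantK_galois κ q.1 hq.1 hq.2 c
    · simp only [hq, false_and, false_or, not_false_eq_true, true_and]
      rw [quantK, if_neg hq]
  rw [hset]
  have hm1 : MeasurableSet {q : Z × ℝ | 0 < q.2 ∧ q.2 < 1} := by
    apply MeasurableSet.inter
    · exact measurableSet_lt measurable_const measurable_snd
    · exact measurableSet_lt measurable_snd measurable_const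
  have hm2 : MeasurableSet {q : Z × ℝ | q.2 ≤ cdfK κ q.1 c} := by
    apply measurableSet_le measurable_snd
    exact (measurable_cdfK κ).comp (measurable_id.prodMk measurable_const |>.comp measurable_fst)
  have hm3 : MeasurableSet {q : Z × ℝ | (0:ℝ) ≤ c} := by
    rcases le_or_gt 0 c with h | h
    · have he : {q : Z × ℝ | (0:ℝ) ≤ c} = Set.univ := eq_univ_of_forall fun q => h
      rw [he]; exact MeasurableSet.univ
    · have he : {q : Z × ℝ | (0:ℝ) ≤ c} = ∅ :=
        eq_empty_of_forall_notMem fun q hq => absurd hq (not_le.2 h)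
      rw [he]; exact MeasurableSet.empty
  exact (hm1.inter hm2).union (hm1.compl.inter hm3)

lemma quantK_mem_Ioo (κ : Kernel Z ℝ) [IsMarkovKernel κ] (z : Z) {p : ℝ}
    (hp : 0 < p) (hp1 : p < 1) : p ≤ cdfK κ z (quantK κ z p) :=
  (quantK_galois κ z hp hp1 _).1 le_rfl

lemma quantK_injOn (κ : Kernel Z ℝ) [IsMarkovKernel κ] (z : Z)
    (hz : ∀ x : ℝ, κ z {x} = 0) :
    InjOn (quantK κ z) (Ioo (0:ℝ) 1) := by
  have key : ∀ p q : ℝ, p ∈ Ioo (0:ℝ) 1 → q ∈ Ioo (0:ℝ) 1 → p < q →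
      quantK κ z p = quantK κ z q → False := by
    intro p q hp hq hpq heq
    set a := quantK κ z q with ha
    -- measure of Iio a is at most p
    have hIio : κ z (Iio a) ≤ ENNReal.ofReal p := by
      apply le_of_tendsto (tendsto_measure_Iic_sub (κ z) a)
      apply Eventually.of_forall
      intro n
      have hlt : ¬ (quantK κ z p ≤ a - ((n:ℝ)+1)⁻¹) := by
        intro h
        rw [heq] at h
        have : (0:ℝ) < ((n:ℝ)+1)⁻¹ := by positivity
        linarith
      rw [quantK_galois κ z hp.1 hp.2] at hlt
      push_neg at hlt
      rw [← ofReal_cdfK κ z]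
      exact ENNReal.ofReal_le_ofReal hlt.le
    have hIic : ENNReal.ofReal q ≤ κ z (Iic a) := by
      rw [← ofReal_cdfK κ z]
      exact ENNReal.ofReal_le_ofReal (quantK_mem_Ioo κ z hq.1 hq.2)
    rw [← measure_congr (Iio_ae_eq_Iic' (hz a))] at hIic
    have : ENNReal.ofReal q ≤ ENNReal.ofReal p := le_trans hIic hIio
    rw [ENNReal.ofReal_le_ofReal_iff (by linarith [hp.1])] at this
    linarith
  intro p hp q hq heq
  rcases lt_trichotomy p q with h | h | h
  · exact absurd heq (fun he => key p q hp hq h he)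
  · exact h
  · exact absurd heq (fun he => key q p hq hp h he.symm)

/-! ### Helper: conull intersection -/

lemma measure_inter_conull' {α : Type*} [MeasurableSpace α] (μ : Measure α)
    {g : Set α} (hg : μ gᶜ = 0) (s : Set α) : μ (s ∩ g) = μ s := by
  refine le_antisymm (measure_mono inter_subset_left) ?_
  calc μ s ≤ μ ((s ∩ g) ∪ gᶜ) := measure_mono (fun x hx => by
        by_cases h : x ∈ g
        · exact Or.inl ⟨hx, h⟩
        · exact Or.inr h)
    _ ≤ μ (s ∩ g) + μ gᶜ := measure_union_le _ _
    _ = μ (s ∩ g) := by rw [hg, add_zero]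

/-! ### The injection lemma -/

lemma exists_inj_map (μ ν : Kernel Z ℝ) [IsMarkovKernel μ] [IsMarkovKernel ν]
    (hμ : ∀ z x, μ z {x} = 0) (hν : ∀ z x, ν z {x} = 0) :
    ∃ f : Z × ℝ → ℝ, Measurable f ∧ (∀ z, Injective fun x => f (z, x)) ∧
      ∀ z, (μ z).map (fun x => f (z, x)) = ν z := by
  obtain ⟨em, emMeas, emInj⟩ :=
    MeasurableSpace.measurable_injection_nat_bool_of_countablySeparated ℝ
  have hCembed : MeasurableEmbedding myCantor :=
    measurable_myCantor.measurableEmbedding myCantor_injective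
  set C : Set ℝ := range myCantor with hC
  have hCmeas : MeasurableSet C := hCembed.measurableSet_range
  have hCsub : C ⊆ Ioo 0 1 := by rintro _ ⟨b, rfl⟩; exact myCantor_mem_Ioo b
  -- the good set
  set good : Set (Z × ℝ) := {q | (0 < cdfK μ q.1 q.2 ∧ cdfK μ q.1 q.2 < 1
      ∧ cdfK μ q.1 q.2 ∉ C) ∧ ∀ r : ℚ, (r:ℝ) < q.2 → cdfK μ q.1 (r:ℝ) < cdfK μ q.1 q.2}
    with hgood
  have Fm : Measurable fun q : Z × ℝ => cdfK μ q.1 q.2 := measurable_cdfK μ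
  have hgood_meas : MeasurableSet good := by
    apply MeasurableSet.inter
    · apply MeasurableSet.inter
      · exact measurableSet_lt measurable_const Fm
      · apply MeasurableSet.inter
        · exact measurableSet_lt Fm measurable_const
        · exact (Fm hCmeas).compl
    · have : {q : Z × ℝ | ∀ r : ℚ, (r:ℝ) < q.2 → cdfK μ q.1 (r:ℝ) < cdfK μ q.1 q.2}
          = ⋂ r : ℚ, ({q : Z × ℝ | q.2 ≤ (r:ℝ)} ∪
            {q : Z × ℝ | cdfK μ q.1 (r:ℝ) < cdfK μ q.1 q.2}) := by
        ext q
        simp only [mem_setOf_eq, mem_iInter, mem_union, mem_setOf_eq]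
        constructor
        · intro h r
          rcases le_or_gt q.2 (r:ℝ) with h' | h'
          · exact Or.inl h'
          · exact Or.inr (h r h')
        · intro h r hr
          rcases h r with h' | h'
          · linarith
          · exact h'
      change MeasurableSet {q : Z × ℝ | ∀ r : ℚ, (r:ℝ) < q.2 → cdfK μ q.1 (r:ℝ) < cdfK μ q.1 q.2}
      rw [this]
      apply MeasurableSet.iInter
      intro r
      apply MeasurableSet.union
      · exact measurableSet_le measurable_snd measurable_const
      · exact measurableSet_lt
          ((measurable_cdfK μ).comp (measurable_fst.prodMk measurable_const)) Fm
  classical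
  set F : Z × ℝ → ℝ := fun q => if q ∈ good then quantK ν q.1 (cdfK μ q.1 q.2)
      else quantK ν q.1 (myCantor (em q.2)) with hFdef
  have hFmeas : Measurable F := by
    apply Measurable.ite hgood_meas
    · exact (measurable_quantK ν).comp (measurable_fst.prodMk Fm)
    · exact (measurable_quantK ν).comp
        (measurable_fst.prodMk (measurable_myCantor.comp (emMeas.comp measurable_snd)))
  refine ⟨F, hFmeas, ?_, ?_⟩
  · -- injectivity in the fiber
    intro z x y hxy
    simp only [hFdef] at hxy
    have hval : ∀ w : ℝ, ((z,w) ∈ good → (cdfK μ z w ∈ Ioo (0:ℝ) 1 ∧ cdfK μ z w ∉ C))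
        ∧ ((z,w) ∉ good → myCantor (em w) ∈ Ioo (0:ℝ) 1 ∧ myCantor (em w) ∈ C) := by
      intro w
      constructor
      · rintro ⟨⟨h1, h2, h3⟩, -⟩
        exact ⟨⟨h1, h2⟩, h3⟩
      · intro _
        exact ⟨hCsub ⟨em w, rfl⟩, ⟨em w, rfl⟩⟩
    by_cases hx : (z,x) ∈ good <;> by_cases hy : (z,y) ∈ good
    · rw [if_pos hx, if_pos hy] at hxy
      have heq : cdfK μ z x = cdfK μ z y :=
        quantK_injOn ν z (hν z) ((hval x).1 hx).1 ((hval y).1 hy).1 hxy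
      by_contra hne
      rcases lt_or_gt_of_ne hne with h | h
      · obtain ⟨r, hr1, hr2⟩ := exists_rat_btwn h
        have := hy.2 r hr2
        have hmono := cdfK_mono μ z hr1.le
        rw [← heq] at this
        linarith
      · obtain ⟨r, hr1, hr2⟩ := exists_rat_btwn h
        have := hx.2 r hr2
        have hmono := cdfK_mono μ z hr1.le
        rw [heq] at this
        linarith
    · rw [if_pos hx, if_neg hy] at hxy
      have heq : cdfK μ z x = myCantor (em y) :=
        quantK_injOn ν z (hν z) ((hval x).1 hx).1 ((hval y).2 hy).1 hxy
      exact absurd (heq ▸ ((hval y).2 hy).2) ((hval x).1 hx).2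
    · rw [if_neg hx, if_pos hy] at hxy
      have heq : myCantor (em x) = cdfK μ z y :=
        quantK_injOn ν z (hν z) ((hval x).2 hx).1 ((hval y).1 hy).1 hxy
      exact absurd (heq ▸ ((hval x).2 hx).2) ((hval y).1 hy).2
    · rw [if_neg hx, if_neg hy] at hxy
      have heq : myCantor (em x) = myCantor (em y) :=
        quantK_injOn ν z (hν z) ((hval x).2 hx).1 ((hval y).2 hy).1 hxy
      exact emInj (myCantor_injective heq)
  · -- the pushforward property
    intro z
    set fz : ℝ → ℝ := fun x => F (z, x) with hfz
    have hfzmeas : Measurable fz := hFmeas.comp measurable_prodMk_left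
    show (μ z).map fz = ν z
    have : IsProbabilityMeasure ((μ z).map fz) :=
      Measure.isProbabilityMeasure_map hfzmeas.aemeasurable
    -- the good fiber is conull
    set goodz : Set ℝ := {x | (z,x) ∈ good} with hgoodz
    have hnull : μ z goodzᶜ = 0 := by
      have hsub : goodzᶜ ⊆ {x | cdfK μ z x ≤ 0} ∪ ((cdfK μ z) ⁻¹' {1})
          ∪ ((cdfK μ z) ⁻¹' C)
          ∪ (⋃ r : ℚ, ({x | cdfK μ z x ≤ cdfK μ z (r:ℝ)} \ Iic (r:ℝ))) := by
        intro x hx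
        rw [mem_compl_iff] at hx
        by_cases h1 : cdfK μ z x ≤ 0
        · exact Or.inl (Or.inl (Or.inl h1))
        by_cases h2 : (1:ℝ) ≤ cdfK μ z x
        · exact Or.inl (Or.inl (Or.inr (le_antisymm (cdfK_le_one μ z x) h2)))
        by_cases h3 : cdfK μ z x ∈ C
        · exact Or.inl (Or.inr h3)
        have hnot : ¬ ∀ r : ℚ, (r:ℝ) < x → cdfK μ z (r:ℝ) < cdfK μ z x := by
          intro hall
          exact hx ⟨⟨not_le.1 h1, not_le.1 h2, h3⟩, hall⟩
        push_neg at hnot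
        obtain ⟨r, hr1, hr2⟩ := hnot
        exact Or.inr (mem_iUnion.2 ⟨r, ⟨hr2, not_le.2 hr1⟩⟩)
      apply measure_mono_null hsub
      have hmap := map_cdfK μ z (hμ z)
      have hcm := measurable_cdfK_right μ z
      have h1 : μ z {x | cdfK μ z x ≤ 0} = 0 := by
        rw [measure_cdfK_le μ z (hμ z) le_rfl zero_le_one]
        simp
      have h2 : μ z ((cdfK μ z) ⁻¹' {1}) = 0 := by
        rw [← Measure.map_apply hcm (measurableSet_singleton 1), hmap,
          Measure.restrict_apply (measurableSet_singleton 1)]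
        have : ({(1:ℝ)} ∩ Icc 0 1 : Set ℝ) ⊆ {1} := inter_subset_left
        exact measure_mono_null this (by simp)
      have h3 : μ z ((cdfK μ z) ⁻¹' C) = 0 := by
        rw [← Measure.map_apply hcm hCmeas, hmap, Measure.restrict_apply hCmeas]
        exact measure_mono_null inter_subset_left volume_range_myCantor
      have h4 : μ z (⋃ r : ℚ, ({x | cdfK μ z x ≤ cdfK μ z (r:ℝ)} \ Iic (r:ℝ))) = 0 := by
        apply measure_iUnion_null
        intro r
        have hsub' : Iic (r:ℝ) ⊆ {x | cdfK μ z x ≤ cdfK μ z (r:ℝ)} :=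
          fun x hx => cdfK_mono μ z (mem_Iic.1 hx)
        have heq1 : μ z {x | cdfK μ z x ≤ cdfK μ z (r:ℝ)} = ENNReal.ofReal (cdfK μ z (r:ℝ)) :=
          measure_cdfK_le μ z (hμ z) (cdfK_nonneg μ z _) (cdfK_le_one μ z _)
        rw [measure_diff hsub' measurableSet_Iic.nullMeasurableSet (measure_ne_top _ _),
          heq1, ofReal_cdfK μ z]
        simp
      rw [measure_union_null_iff, measure_union_null_iff, measure_union_null_iff]
      exact ⟨⟨⟨h1, h2⟩, h3⟩, h4⟩
    apply Measure.ext_of_Iic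
    intro c
    rw [Measure.map_apply hfzmeas measurableSet_Iic]
    set t : ℝ := cdfK ν z c with htdef
    have hinter : goodz ∩ (fz ⁻¹' Iic c) = goodz ∩ {x | cdfK μ z x ≤ t} := by
      ext x
      simp only [mem_inter_iff, mem_preimage, mem_Iic, mem_setOf_eq, hgoodz]
      constructor
      · rintro ⟨hg, hle⟩
        refine ⟨hg, ?_⟩
        rw [hfz, hFdef] at hle
        simp only [if_pos hg] at hle
        exact (quantK_galois ν z hg.1.1 hg.1.2.1 c).1 hle
      · rintro ⟨hg, hle⟩
        refine ⟨hg, ?_⟩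
        rw [hfz, hFdef]
        simp only [if_pos hg]
        exact (quantK_galois ν z hg.1.1 hg.1.2.1 c).2 hle
    calc μ z (fz ⁻¹' Iic c) = μ z (fz ⁻¹' Iic c ∩ goodz) := (measure_inter_conull' _ hnull _).symm
      _ = μ z ({x | cdfK μ z x ≤ t} ∩ goodz) := by rw [inter_comm, hinter, inter_comm]
      _ = μ z {x | cdfK μ z x ≤ t} := measure_inter_conull' _ hnull _
      _ = ENNReal.ofReal t := measure_cdfK_le μ z (hμ z) (cdfK_nonneg ν z c) (cdfK_le_one ν z c)
      _ = ν z (Iic c) := ofReal_cdfK ν z c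

/-! ### Schröder–Bernstein transfer in a fiber -/

lemma sb_transfer {f g h : ℝ → ℝ} (hf : Measurable f) (hfi : Injective f)
    (hg : Measurable g) (hgi : Injective g) (hh : Measurable h)
    (μ ν : Measure ℝ) [IsProbabilityMeasure μ] [IsProbabilityMeasure ν]
    (hmapf : μ.map f = ν) (hmapg : ν.map g = μ)
    {A : Set ℝ} (hA : MeasurableSet A) (hfix : Aᶜ = g '' (f '' A)ᶜ)
    (hhA : ∀ x ∈ A, h x = f x) (hhAc : ∀ y, g y ∉ A → h (g y) = y) :
    Bijective h ∧ μ.map h = ν := by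
  have hfe : MeasurableEmbedding f := hf.measurableEmbedding hfi
  have hge : MeasurableEmbedding g := hg.measurableEmbedding hgi
  set B : Set ℝ := f '' A with hB
  have hBmeas : MeasurableSet B := hfe.measurableSet_image' hA
  have himg : ∀ x ∈ Aᶜ, ∃ y, y ∉ B ∧ g y = x ∧ h x = y := by
    intro x hx
    rw [hfix] at hx
    obtain ⟨y, hy, rfl⟩ := hx
    have hgyA : g y ∈ Aᶜ := by rw [hfix]; exact mem_image_of_mem g hy
    exact ⟨y, hy, rfl, hhAc y hgyA⟩
  have hinj : Injective h := by
    intro x1 x2 heq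
    by_cases h1 : x1 ∈ A <;> by_cases h2 : x2 ∈ A
    · rw [hhA x1 h1, hhA x2 h2] at heq
      exact hfi heq
    · obtain ⟨y2, hy2, hgy2, hhy2⟩ := himg x2 h2
      rw [hhA x1 h1, hhy2] at heq
      exact absurd (heq ▸ mem_image_of_mem f h1) hy2
    · obtain ⟨y1, hy1, hgy1, hhy1⟩ := himg x1 h1
      rw [hhA x2 h2, hhy1] at heq
      exact absurd (heq.symm ▸ mem_image_of_mem f h2) hy1
    · obtain ⟨y1, hy1, hgy1, hhy1⟩ := himg x1 h1
      obtain ⟨y2, hy2, hgy2, hhy2⟩ := himg x2 h2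
      rw [hhy1, hhy2] at heq
      rw [← hgy1, ← hgy2, heq]
  have hsurj : Surjective h := by
    intro y
    by_cases hy : y ∈ B
    · obtain ⟨a, ha, rfl⟩ := hy
      exact ⟨a, hhA a ha⟩
    · have hxc : g y ∈ Aᶜ := by
        rw [hfix]
        exact mem_image_of_mem g hy
      exact ⟨g y, hhAc y hxc⟩
  refine ⟨⟨hinj, hsurj⟩, ?_⟩
  apply Measure.ext
  intro S hS
  rw [Measure.map_apply hh hS]
  have hpre : h ⁻¹' S = f ⁻¹' (S ∩ B) ∪ g '' (S ∩ Bᶜ) := by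
    ext x
    simp only [mem_preimage, mem_union]
    by_cases hx : x ∈ A
    · rw [hhA x hx]
      constructor
      · intro hfx
        exact Or.inl ⟨hfx, mem_image_of_mem f hx⟩
      · rintro (⟨h1, _⟩ | ⟨y, ⟨hy1, hy2⟩, rfl⟩)
        · exact h1
        · -- g y ∈ A, but g y ∈ g '' Bᶜ ⊆ Aᶜ : contradiction
          exfalso
          have : g y ∈ Aᶜ := by rw [hfix]; exact mem_image_of_mem g hy2
          exact this hx
    · obtain ⟨y, hy, hgy, hhy⟩ := himg x hx
      rw [hhy]
      constructor
      · intro hyS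
        exact Or.inr ⟨y, ⟨hyS, hy⟩, hgy⟩
      · rintro (⟨h1, h2⟩ | ⟨y', ⟨hy1', hy2'⟩, hgy'⟩)
        · -- f x ∈ B means x ∈ A by injectivity
          exfalso
          obtain ⟨a, ha, hfa⟩ := h2
          exact hx (hfi hfa ▸ ha)
        · have : y' = y := hgi (by rw [hgy', hgy])
          rw [← this]
          exact hy1'
  rw [hpre]
  have hd : Disjoint (f ⁻¹' (S ∩ B)) (g '' (S ∩ Bᶜ)) := by
    rw [disjoint_left]
    rintro x hx1 ⟨y, ⟨_, hy2⟩, rfl⟩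
    have hgyA : g y ∈ Aᶜ := by rw [hfix]; exact mem_image_of_mem g hy2
    have : g y ∈ A := by
      obtain ⟨h1, a, ha, hfa⟩ := hx1
      exact hfi hfa ▸ ha
    exact hgyA this
  rw [measure_union hd (hge.measurableSet_image' (hS.inter hBmeas.compl))]
  have e1 : μ (f ⁻¹' (S ∩ B)) = ν (S ∩ B) := by
    rw [← hmapf, Measure.map_apply hf (hS.inter hBmeas)]
  have e2 : μ (g '' (S ∩ Bᶜ)) = ν (S ∩ Bᶜ) := by
    rw [← hmapg, Measure.map_apply hg (hge.measurableSet_image' (hS.inter hBmeas.compl)),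
      preimage_image_eq _ hgi]
  rw [e1, e2, show S ∩ Bᶜ = S \ B by rw [diff_eq]]
  exact measure_inter_add_diff S hBmeas

/-! ### Parametrized Schröder–Bernstein -/

lemma exists_param_bijection [StandardBorelSpace Z]
    (μ ν : Kernel Z ℝ) [IsMarkovKernel μ] [IsMarkovKernel ν]
    (hμ : ∀ z x, μ z {x} = 0) (hν : ∀ z x, ν z {x} = 0) :
    ∃ H : Z × ℝ → ℝ, Measurable H ∧ ∀ z, Bijective (fun x => H (z,x)) ∧
      (μ z).map (fun x => H (z,x)) = ν z := by
  classical
  obtain ⟨f, hfm, hfi, hfmap⟩ := exists_inj_map μ ν hμ hν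
  obtain ⟨g, hgm, hgi, hgmap⟩ := exists_inj_map ν μ hν hμ
  set Fh : Z × ℝ → Z × ℝ := fun p => (p.1, f p) with hFh
  set Gh : Z × ℝ → Z × ℝ := fun p => (p.1, g p) with hGh
  have hFhm : Measurable Fh := measurable_fst.prodMk hfm
  have hGhm : Measurable Gh := measurable_fst.prodMk hgm
  have hFhi : Injective Fh := by
    rintro ⟨z1, x1⟩ ⟨z2, x2⟩ hp
    have h1 : z1 = z2 := congrArg Prod.fst hp
    subst h1
    have h2 : f (z1, x1) = f (z1, x2) := congrArg Prod.snd hp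
    rw [hfi z1 h2]
  have hGhi : Injective Gh := by
    rintro ⟨z1, y1⟩ ⟨z2, y2⟩ hp
    have h1 : z1 = z2 := congrArg Prod.fst hp
    subst h1
    have h2 : g (z1, y1) = g (z1, y2) := congrArg Prod.snd hp
    rw [hgi z1 h2]
  have hFhe : MeasurableEmbedding Fh := hFhm.measurableEmbedding hFhi
  have hGhe : MeasurableEmbedding Gh := hGhm.measurableEmbedding hGhi
  -- the Schröder–Bernstein fixed point
  set Φ : Set (Z × ℝ) → Set (Z × ℝ) := fun S => (Gh '' (Fh '' S)ᶜ)ᶜ with hΦ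
  have Φmono : ∀ {S T}, S ⊆ T → Φ S ⊆ Φ T := fun hST =>
    compl_subset_compl.mpr <| image_mono <| compl_subset_compl.mpr <| image_mono hST
  set A : Set (Z × ℝ) := ⋂ n, Φ^[n] Set.univ with hA
  have hAmeas : MeasurableSet A := by
    apply MeasurableSet.iInter
    intro n
    induction' n with n ih
    · exact MeasurableSet.univ
    rw [Function.iterate_succ', Function.comp_apply]
    exact (hGhe.measurableSet_image' (hFhe.measurableSet_image' ih).compl).compl
  have hfix : Φ A = A := by
    apply subset_antisymm
    · apply subset_iInter
      intro n
      cases n with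
      | zero => exact subset_univ _
      | succ n =>
        rw [Function.iterate_succ', Function.comp_apply]
        exact Φmono (iInter_subset _ _)
    · rintro x hx ⟨y, hy, rfl⟩
      rw [hA, mem_iInter] at hx
      apply hy
      rw [hFhe.injective.injOn.image_iInter_eq]
      rw [mem_iInter]
      intro n
      have hxn := hx n.succ
      rw [Function.iterate_succ', Function.comp_apply] at hxn
      by_contra hcon
      exact hxn ⟨y, hcon, rfl⟩
  have hfixc : Aᶜ = Gh '' (Fh '' A)ᶜ := by
    conv_lhs => rw [← hfix]
    rw [hΦ]
    simp only [compl_compl]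
  -- measurable left inverse of Gh
  set ginv : Z × ℝ → Z × ℝ := fun p =>
    if hp : p ∈ range Gh then Set.rangeSplitting Gh ⟨p, hp⟩ else p with hginv
  have hginvm : Measurable ginv := by
    apply Measurable.dite (hGhe.measurable_rangeSplitting)
      (measurable_subtype_coe) hGhe.measurableSet_range
  have hginvG : ∀ q, ginv (Gh q) = q := by
    intro q
    rw [hginv]
    simp only [dif_pos (mem_range_self q)]
    have : (⟨Gh q, mem_range_self q⟩ : range Gh) = Set.rangeFactorization Gh q := rfl
    rw [this]
    exact Set.rightInverse_rangeSplitting hGhe.injective q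
  set H : Z × ℝ → ℝ := fun p => if p ∈ A then f p else (ginv p).2 with hH
  have hHm : Measurable H := by
    apply Measurable.ite hAmeas hfm (measurable_snd.comp hginvm)
  refine ⟨H, hHm, ?_⟩
  intro z
  -- fiber data
  set Az : Set ℝ := {x | (z,x) ∈ A} with hAz
  have hAzmeas : MeasurableSet Az := measurable_prodMk_left hAmeas
  have hslice : Azᶜ = (fun y => g (z,y)) '' (((fun x => f (z,x)) '' Az)ᶜ) := by
    ext x
    simp only [mem_compl_iff, hAz, mem_setOf_eq, mem_image]
    constructor
    · intro hx
      have : (z,x) ∈ Aᶜ := hx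
      rw [hfixc] at this
      obtain ⟨⟨z', y⟩, hy, heq⟩ := this
      have hz' : z' = z := congrArg Prod.fst heq
      subst hz'
      refine ⟨y, ?_, congrArg Prod.snd heq⟩
      intro ⟨x', hx', hfx'⟩
      apply hy
      exact ⟨(z', x'), hx', by rw [hFh]; simp [hfx']⟩
    · rintro ⟨y, hy, hgy⟩
      intro hmem
      have : (z, x) ∈ Aᶜ := by
        rw [hfixc]
        refine ⟨(z, y), ?_, by rw [hGh]; simp [hgy]⟩
        intro ⟨⟨z', x'⟩, hx', heq⟩
        have hz' : z' = z := congrArg Prod.fst heq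
        subst hz'
        apply hy
        exact ⟨x', hx', congrArg Prod.snd heq⟩
      exact this hmem
  have hfibf : Measurable fun x => f (z, x) := hfm.comp measurable_prodMk_left
  have hfibg : Measurable fun y => g (z, y) := hgm.comp measurable_prodMk_left
  have hfibh : Measurable fun x => H (z, x) := hHm.comp measurable_prodMk_left
  have := Measure.isProbabilityMeasure_map (μ := μ z) hfibf.aemeasurable
  have hres := sb_transfer hfibf (hfi z) hfibg (hgi z) hfibh (μ z) (ν z)
    (hfmap z) (hgmap z) hAzmeas hslice
    (fun x hx => by simp only [hH]; rw [if_pos (show (z,x) ∈ A from hx)])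
    (fun y hy => by
      have hmem : (z, g (z, y)) ∉ A := hy
      have : H (z, g (z, y)) = (ginv (z, g (z, y))).2 := by
        simp only [hH]; rw [if_neg hmem]
      rw [this]
      have : (z, g (z, y)) = Gh (z, y) := rfl
      rw [this, hginvG])
  exact hres

end ParamIso

end ParamIsoAux

/-- Let `X`, `Y`, `Z` be standard Borel spaces (`X`, `Y` uncountable),
`μ` a kernel from `Z` to `X` and `ν` a kernel from `Z` to `Y` such that all `μ^z`, `ν^z`
are atomless probability measures.  Then there is a jointly Borel `G : Z × X → Y` such
that each `G (z, ·) : X → Y` is a Borel isomorphism with `G (z, ·)_* μ^z = ν^z`. -/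
theorem exists_parametrized_borel_isomorphism_of_kernels
    {X Y Z : Type*} [MeasurableSpace X] [StandardBorelSpace X] [Uncountable X]
    [MeasurableSpace Y] [StandardBorelSpace Y] [Uncountable Y]
    [MeasurableSpace Z] [StandardBorelSpace Z]
    (μ : Kernel Z X) [IsMarkovKernel μ] (ν : Kernel Z Y) [IsMarkovKernel ν]
    (hμ : ∀ (z : Z) (x : X), μ z {x} = 0) (hν : ∀ (z : Z) (y : Y), ν z {y} = 0) :
    ∃ G : Z × X → Y, Measurable G ∧
      ∀ z : Z, Function.Bijective (fun x => G (z, x)) ∧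
        (μ z).map (fun x => G (z, x)) = ν z := by
  have e : X ≃ᵐ ℝ := PolishSpace.measurableEquivOfNotCountable not_countable not_countable
  have e' : Y ≃ᵐ ℝ := PolishSpace.measurableEquivOfNotCountable not_countable not_countable
  set μ' : Kernel Z ℝ := μ.map e with hμ'def
  set ν' : Kernel Z ℝ := ν.map e' with hν'def
  haveI : IsMarkovKernel μ' := Kernel.IsMarkovKernel.map μ e.measurable
  haveI : IsMarkovKernel ν' := Kernel.IsMarkovKernel.map ν e'.measurable
  have hμ'at : ∀ z t, μ' z {t} = 0 := by
    intro z t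
    rw [hμ'def, Kernel.map_apply μ e.measurable,
      Measure.map_apply e.measurable (measurableSet_singleton t)]
    have hpre : e ⁻¹' {t} = {e.symm t} := by
      ext x
      simp only [Set.mem_preimage, Set.mem_singleton_iff]
      constructor
      · intro h; rw [← h]; exact (e.symm_apply_apply x).symm
      · intro h; rw [h]; exact e.apply_symm_apply t
    rw [hpre]
    exact hμ z _
  have hν'at : ∀ z t, ν' z {t} = 0 := by
    intro z t
    rw [hν'def, Kernel.map_apply ν e'.measurable,
      Measure.map_apply e'.measurable (measurableSet_singleton t)]
    have hpre : e' ⁻¹' {t} = {e'.symm t} := by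
      ext x
      simp only [Set.mem_preimage, Set.mem_singleton_iff]
      constructor
      · intro h; rw [← h]; exact (e'.symm_apply_apply x).symm
      · intro h; rw [h]; exact e'.apply_symm_apply t
    rw [hpre]
    exact hν z _
  obtain ⟨H, hHm, hH⟩ := ParamIso.exists_param_bijection μ' ν' hμ'at hν'at
  refine ⟨fun q => e'.symm (H (q.1, e q.2)), ?_, ?_⟩
  · exact e'.symm.measurable.comp
      (hHm.comp (measurable_fst.prodMk (e.measurable.comp measurable_snd)))
  · intro z
    obtain ⟨hbij, hmap⟩ := hH z
    have hHz : Measurable fun t => H (z, t) := hHm.comp measurable_prodMk_left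
    constructor
    · have hcomp : (fun x : X => e'.symm (H (z, e x)))
          = (⇑e'.symm ∘ (fun t => H (z,t)) ∘ ⇑e) := rfl
      rw [hcomp]
      exact e'.symm.bijective.comp (hbij.comp e.bijective)
    · calc (μ z).map (fun x => e'.symm (H (z, e x)))
          = (μ z).map (⇑e'.symm ∘ fun x : X => H (z, e x)) := rfl
        _ = ((μ z).map (fun x : X => H (z, e x))).map e'.symm :=
            (Measure.map_map e'.symm.measurable (hHz.comp e.measurable)).symm
        _ = ((μ z).map ((fun t => H (z, t)) ∘ ⇑e)).map e'.symm := rfl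
        _ = (((μ z).map e).map (fun t => H (z, t))).map e'.symm := by
            rw [Measure.map_map hHz e.measurable]
        _ = ((μ' z).map (fun t => H (z, t))).map e'.symm := by
            rw [hμ'def, Kernel.map_apply μ e.measurable]
        _ = (ν' z).map e'.symm := by rw [hmap]
        _ = ((ν z).map e').map e'.symm := by
            rw [hν'def, Kernel.map_apply ν e'.measurable]
        _ = (ν z).map (⇑e'.symm ∘ ⇑e') := Measure.map_map e'.symm.measurable e'.measurable
        _ = ν z := by
            rw [MeasurableEquiv.symm_comp_self, Measure.map_id]
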